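/- Let q ∈ [1, ∞). There exists a constant C depending only on q such that: for every locally integrable f : ℝ³ → ℝ with f ∈ L^q(ℝ³) and finite BMO seminorm [f]_{BMO}, for every x ∈ ℝ³ and every radius r ∈ (0, 1), the average f_r(x) of f over the ball B_r(x) satisfies |f_r(x)| ≤ C ((1 + |ln r|) [f]_{BMO} + ‖f‖_{L^q(ℝ³)}). -/

import Mathlib

open MeasureTheory

noncomputable section

/-- Euclidean three-space. -/
abbrev E3 := EuclideanSpace ℝ (Fin 3)

/-- The set of averages over balls of |g − (average of g)|, whose supremum is the BMO
seminorm of g. -/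
def bmoSet (g : E3 → ℝ) : Set ℝ :=
  { m : ℝ | ∃ (x : E3) (ρ : ℝ), 0 < ρ ∧
      m = ⨍ y in Metric.ball x ρ, |g y - ⨍ z in Metric.ball x ρ, g z| }

/-- The BMO seminorm of g : ℝ³ → ℝ, the supremum over all centers x and radii ρ > 0 of
the average over B_ρ(x) of |g − g_{B_ρ(x)}|. -/
def bmoSeminorm (g : E3 → ℝ) : ℝ := sSup (bmoSet g)

open Metric in
lemma intOnBall {f : E3 → ℝ} (hf : LocallyIntegrable f volume) (x : E3) (ρ : ℝ) :
    IntegrableOn f (ball x ρ) volume :=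
  (hf.integrableOn_isCompact (isCompact_closedBall x ρ)).mono_set ball_subset_closedBall

lemma abs_avg_le (f : E3 → ℝ) (s : Set E3) :
    |⨍ y in s, f y| ≤ ⨍ y in s, |f y| := by
  rw [setAverage_eq, setAverage_eq, smul_eq_mul, smul_eq_mul, abs_mul,
    abs_of_nonneg (inv_nonneg.2 measureReal_nonneg)]
  gcongr
  calc |∫ y in s, f y| = ‖∫ y in s, f y‖ := (Real.norm_eq_abs _).symm
    _ ≤ ∫ y in s, ‖f y‖ := norm_integral_le_integral_norm f
    _ = ∫ y in s, |f y| := by simp [Real.norm_eq_abs]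

lemma avg_abs_nonneg (f : E3 → ℝ) (s : Set E3) : 0 ≤ ⨍ y in s, |f y| := by
  rw [setAverage_eq, smul_eq_mul]
  have : 0 ≤ ∫ y in s, |f y| := integral_nonneg fun y => abs_nonneg _
  positivity

lemma bmo_ge {f : E3 → ℝ} (hb : BddAbove (bmoSet f)) (x : E3) {ρ : ℝ} (hρ : 0 < ρ) :
    (⨍ y in Metric.ball x ρ, |f y - ⨍ z in Metric.ball x ρ, f z|) ≤ bmoSeminorm f :=
  le_csSup hb ⟨x, ρ, hρ, rfl⟩

lemma bmo_nonneg {f : E3 → ℝ} (hb : BddAbove (bmoSet f)) : 0 ≤ bmoSeminorm f :=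
  le_trans (avg_abs_nonneg _ _) (bmo_ge hb 0 one_pos)

open Metric in
lemma vol_ball_toReal (x : E3) {ρ : ℝ} (hρ : 0 ≤ ρ) :
    (volume (ball x ρ)).toReal = ρ ^ 3 * (volume (ball (0:E3) 1)).toReal := by
  rw [Measure.addHaar_ball volume x hρ, ENNReal.toReal_mul,
    ENNReal.toReal_ofReal (by positivity)]
  norm_num [finrank_euclideanSpace]

open Metric in
lemma vol_ball_double (x : E3) {ρ : ℝ} (hρ : 0 ≤ ρ) :
    (volume (ball x (2 * ρ))).toReal = 8 * (volume (ball x ρ)).toReal := by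
  rw [vol_ball_toReal x hρ, vol_ball_toReal x (by positivity)]
  ring

open Metric in
lemma vol_ball_pos_toReal (x : E3) {ρ : ℝ} (hρ : 0 < ρ) :
    0 < (volume (ball x ρ)).toReal :=
  ENNReal.toReal_pos (measure_ball_pos volume x hρ).ne' measure_ball_lt_top.ne

open Metric in
lemma avg_mono_double {g : E3 → ℝ} (x : E3) {ρ : ℝ} (hρ : 0 < ρ)
    (hg : IntegrableOn g (ball x (2 * ρ)) volume) (hgn : ∀ y, 0 ≤ g y) :
    (⨍ y in ball x ρ, g y) ≤ 8 * ⨍ y in ball x (2 * ρ), g y := by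
  rw [setAverage_eq, setAverage_eq, smul_eq_mul, smul_eq_mul, measureReal_def, measureReal_def,
    vol_ball_double x hρ.le]
  have hv := vol_ball_pos_toReal x hρ
  have hI : (∫ y in ball x ρ, g y) ≤ ∫ y in ball x (2 * ρ), g y := by
    refine setIntegral_mono_set hg (Filter.Eventually.of_forall hgn) ?_
    exact Filter.Eventually.of_forall (ball_subset_ball (by linarith))
  have hI0 : 0 ≤ ∫ y in ball x (2*ρ), g y := integral_nonneg fun y => hgn y
  have hv' : (volume (ball x ρ)).toReal ≠ 0 := hv.ne'
  have heq : 8 * ((8 * (volume (ball x ρ)).toReal)⁻¹ * ∫ y in ball x (2*ρ), g y)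
      = (volume (ball x ρ)).toReal⁻¹ * ∫ y in ball x (2*ρ), g y := by
    field_simp
  rw [heq]
  have hvinv : (0:ℝ) ≤ (volume (ball x ρ)).toReal⁻¹ := by positivity
  exact mul_le_mul_of_nonneg_left hI hvinv

open Metric in
lemma avg_sub_const {f : E3 → ℝ} (hf : LocallyIntegrable f volume) (x : E3) {ρ : ℝ}
    (hρ : 0 < ρ) (c : ℝ) :
    (⨍ y in ball x ρ, (f y - c)) = (⨍ y in ball x ρ, f y) - c := by
  have hv : volume.real (ball x ρ) ≠ 0 := (vol_ball_pos_toReal x hρ).ne'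
  rw [setAverage_eq, setAverage_eq,
    integral_sub (intOnBall hf x ρ) (integrableOn_const measure_ball_lt_top.ne),
    setIntegral_const, smul_eq_mul, smul_eq_mul, smul_eq_mul, mul_sub,
    inv_mul_cancel_left₀ hv]

open Metric in
lemma avg_double_bmo {f : E3 → ℝ} (hf : LocallyIntegrable f volume)
    (hb : BddAbove (bmoSet f)) (x : E3) {ρ : ℝ} (hρ : 0 < ρ) :
    |(⨍ y in ball x ρ, f y) - ⨍ y in ball x (2 * ρ), f y| ≤ 8 * bmoSeminorm f := by
  set b := ⨍ y in ball x (2 * ρ), f y with hbdef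
  have h2ρ : 0 < 2 * ρ := by linarith
  have habs : IntegrableOn (fun y => |f y - b|) (ball x (2*ρ)) volume :=
    ((intOnBall hf x (2*ρ)).sub (integrableOn_const measure_ball_lt_top.ne)).abs
  calc |(⨍ y in ball x ρ, f y) - b|
      = |⨍ y in ball x ρ, (f y - b)| := by rw [avg_sub_const hf x hρ]
    _ ≤ ⨍ y in ball x ρ, |f y - b| := abs_avg_le _ _
    _ ≤ 8 * ⨍ y in ball x (2*ρ), |f y - b| :=
        avg_mono_double x hρ habs (fun y => abs_nonneg _)
    _ ≤ 8 * bmoSeminorm f :=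
        mul_le_mul_of_nonneg_left (bmo_ge hb x h2ρ) (by norm_num)

open Metric in
lemma avg_iter_bmo {f : E3 → ℝ} (hf : LocallyIntegrable f volume)
    (hb : BddAbove (bmoSet f)) (x : E3) {r : ℝ} (hr : 0 < r) (n : ℕ) :
    |(⨍ y in ball x r, f y) - ⨍ y in ball x (2 ^ n * r), f y|
      ≤ 8 * n * bmoSeminorm f := by
  induction n with
  | zero => simp
  | succ n ih =>
    have hρ : (0:ℝ) < 2 ^ n * r := by positivity
    have key := avg_double_bmo hf hb x hρ
    have heq : 2 * (2 ^ n * r) = 2 ^ (n+1) * r := by ring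
    rw [heq] at key
    have htri := abs_sub_le (⨍ y in ball x r, f y) (⨍ y in ball x (2 ^ n * r), f y)
      (⨍ y in ball x (2 ^ (n+1) * r), f y)
    push_cast
    calc |(⨍ y in ball x r, f y) - ⨍ y in ball x (2 ^ (n+1) * r), f y|
        ≤ _ + _ := htri
      _ ≤ 8 * n * bmoSeminorm f + 8 * bmoSeminorm f := by
          push_cast at ih; exact add_le_add ih key
      _ = 8 * ((n:ℝ) + 1) * bmoSeminorm f := by ring

open Metric in
lemma avg_lq_bound {q : ℝ} (hq : 1 ≤ q) {f : E3 → ℝ} (hf : LocallyIntegrable f volume)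
    (hm : MemLp f (ENNReal.ofReal q) volume) (x : E3) {ρ : ℝ} (h1 : 1 ≤ ρ) (h2 : ρ ≤ 2) :
    |⨍ y in ball x ρ, f y| ≤
      (volume (ball (0:E3) 1)).toReal⁻¹
        * ((volume (ball (0:E3) 2)) ^ (1 - 1/q)).toReal
        * (eLpNorm f (ENNReal.ofReal q) volume).toReal := by
  have hρ0 : (0:ℝ) < ρ := lt_of_lt_of_le one_pos h1
  have hq0 : (0:ℝ) ≤ q := by linarith
  set μ2 := volume.restrict (ball x 2) with hμ2
  have hfm : AEStronglyMeasurable f μ2 := hf.aestronglyMeasurable.restrict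
  -- step 1: |avg| ≤ (vol B1)⁻¹ * ∫_{B2} |f|
  have habs2 : IntegrableOn (fun y => |f y|) (ball x 2) volume := (intOnBall hf x 2).abs
  have hIle : (∫ y in ball x ρ, |f y|) ≤ ∫ y in ball x 2, |f y| := by
    refine setIntegral_mono_set habs2 (Filter.Eventually.of_forall fun y => abs_nonneg _) ?_
    exact Filter.Eventually.of_forall (ball_subset_ball h2)
  have hvmono : (volume (ball (0:E3) 1)).toReal ≤ (volume (ball x ρ)).toReal := by
    rw [← Measure.addHaar_ball_center volume x 1]
    exact ENNReal.toReal_mono measure_ball_lt_top.ne (measure_mono (ball_subset_ball h1))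
  have hv1 : (0:ℝ) < (volume (ball (0:E3) 1)).toReal := vol_ball_pos_toReal _ one_pos
  have step1 : |⨍ y in ball x ρ, f y| ≤
      (volume (ball (0:E3) 1)).toReal⁻¹ * ∫ y in ball x 2, |f y| := by
    refine (abs_avg_le f _).trans ?_
    rw [setAverage_eq, smul_eq_mul]
    have h0 : 0 ≤ ∫ y in ball x ρ, |f y| := integral_nonneg fun y => abs_nonneg _
    calc (volume (ball x ρ)).toReal⁻¹ * ∫ y in ball x ρ, |f y|
        ≤ (volume (ball (0:E3) 1)).toReal⁻¹ * ∫ y in ball x ρ, |f y| := by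
          gcongr
      _ ≤ (volume (ball (0:E3) 1)).toReal⁻¹ * ∫ y in ball x 2, |f y| := by gcongr
  -- step 2: ∫_{B2}|f| = (eLpNorm f 1 μ2).toReal
  have step2 : (∫ y in ball x 2, |f y|) = (eLpNorm f 1 μ2).toReal := by
    rw [eLpNorm_one_eq_lintegral_enorm, ← integral_norm_eq_lintegral_enorm hfm]
    simp [Real.norm_eq_abs, hμ2]
  -- step 3: Hölder
  have hp1q : (1 : ENNReal) ≤ ENNReal.ofReal q := by
    rw [← ENNReal.ofReal_one]
    exact ENNReal.ofReal_le_ofReal hq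
  have step3 : eLpNorm f 1 μ2 ≤ eLpNorm f (ENNReal.ofReal q) μ2
      * (μ2 Set.univ) ^ (1 - 1/q) := by
    have := eLpNorm_le_eLpNorm_mul_rpow_measure_univ hp1q hfm
    rwa [ENNReal.toReal_one, ENNReal.toReal_ofReal hq0, one_div_one] at this
  have hμ2univ : μ2 Set.univ = volume (ball (0:E3) 2) := by
    rw [hμ2, Measure.restrict_apply_univ, Measure.addHaar_ball_center]
  have step4 : eLpNorm f (ENNReal.ofReal q) μ2 ≤ eLpNorm f (ENNReal.ofReal q) volume :=
    eLpNorm_mono_measure f Measure.restrict_le_self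
  have hNfin : eLpNorm f (ENNReal.ofReal q) volume ≠ ⊤ := hm.2.ne
  have hexp : (0:ℝ) ≤ 1 - 1/q := by
    have : 1/q ≤ 1 := by
      rw [div_le_one (by linarith)]; exact hq
    linarith
  have hVfin : (volume (ball (0:E3) 2)) ^ (1 - 1/q) ≠ ⊤ :=
    (ENNReal.rpow_lt_top_of_nonneg hexp measure_ball_lt_top.ne).ne
  have step5 : (eLpNorm f 1 μ2).toReal ≤ (eLpNorm f (ENNReal.ofReal q) volume).toReal
      * ((volume (ball (0:E3) 2)) ^ (1 - 1/q)).toReal := by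
    rw [← ENNReal.toReal_mul]
    refine ENNReal.toReal_mono (by exact ENNReal.mul_ne_top hNfin hVfin) ?_
    refine step3.trans ?_
    rw [hμ2univ]
    exact mul_le_mul_left step4 _
  calc |⨍ y in ball x ρ, f y|
      ≤ (volume (ball (0:E3) 1)).toReal⁻¹ * ∫ y in ball x 2, |f y| := step1
    _ = (volume (ball (0:E3) 1)).toReal⁻¹ * (eLpNorm f 1 μ2).toReal := by rw [step2]
    _ ≤ (volume (ball (0:E3) 1)).toReal⁻¹ * ((eLpNorm f (ENNReal.ofReal q) volume).toReal
        * ((volume (ball (0:E3) 2)) ^ (1 - 1/q)).toReal) := by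
          have : (0:ℝ) ≤ (volume (ball (0:E3) 1)).toReal⁻¹ := by positivity
          exact mul_le_mul_of_nonneg_left step5 this
    _ = (volume (ball (0:E3) 1)).toReal⁻¹ * ((volume (ball (0:E3) 2)) ^ (1 - 1/q)).toReal
        * (eLpNorm f (ENNReal.ofReal q) volume).toReal := by ring


theorem ball_average_bmo_bound (q : ℝ) (hq : 1 ≤ q) :
    ∃ C : ℝ, ∀ f : E3 → ℝ,
      LocallyIntegrable f volume →
      MemLp f (ENNReal.ofReal q) volume →
      BddAbove (bmoSet f) →
      ∀ (x : E3) (r : ℝ), 0 < r → r < 1 →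
        |⨍ y in Metric.ball x r, f y| ≤
          C * ((1 + |Real.log r|) * bmoSeminorm f
            + (eLpNorm f (ENNReal.ofReal q) volume).toReal) := by
  set Cq : ℝ := (volume (Metric.ball (0:E3) 1)).toReal⁻¹
      * ((volume (Metric.ball (0:E3) 2)) ^ (1 - 1/q)).toReal with hCq
  have hCq0 : 0 ≤ Cq := by
    rw [hCq]; positivity
  refine ⟨16 + Cq, fun f hf hm hb x r hr0 hr1 => ?_⟩
  set n : ℕ := ⌈Real.logb 2 r⁻¹⌉₊ with hn
  set ρ : ℝ := 2 ^ n * r with hρdef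
  have hrinv1 : (1:ℝ) ≤ r⁻¹ := one_le_inv_iff₀.mpr ⟨hr0, hr1.le⟩
  have hlogb0 : 0 ≤ Real.logb 2 r⁻¹ := Real.logb_nonneg one_lt_two hrinv1
  -- 1 ≤ ρ
  have h2n_ge : r⁻¹ ≤ (2:ℝ) ^ n := by
    have hle : Real.logb 2 r⁻¹ ≤ (n:ℝ) := Nat.le_ceil _
    calc r⁻¹ = (2:ℝ) ^ Real.logb 2 r⁻¹ :=
          (Real.rpow_logb two_pos (by norm_num) (inv_pos.2 hr0)).symm
      _ ≤ (2:ℝ) ^ ((n:ℕ):ℝ) := Real.rpow_le_rpow_of_exponent_le one_le_two hle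
      _ = (2:ℝ) ^ n := Real.rpow_natCast 2 n
  have h1ρ : 1 ≤ ρ := by
    have := mul_le_mul_of_nonneg_right h2n_ge hr0.le
    rwa [inv_mul_cancel₀ hr0.ne'] at this
  -- ρ ≤ 2
  have hceil : (n:ℝ) < Real.logb 2 r⁻¹ + 1 := Nat.ceil_lt_add_one hlogb0
  have h2n_le : (2:ℝ) ^ n ≤ 2 * r⁻¹ := by
    calc (2:ℝ) ^ n = (2:ℝ) ^ ((n:ℕ):ℝ) := (Real.rpow_natCast 2 n).symm
      _ ≤ (2:ℝ) ^ (Real.logb 2 r⁻¹ + 1) :=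
          Real.rpow_le_rpow_of_exponent_le one_le_two hceil.le
      _ = (2:ℝ) ^ Real.logb 2 r⁻¹ * 2 := by
          rw [Real.rpow_add two_pos, Real.rpow_one]
      _ = 2 * r⁻¹ := by
          rw [Real.rpow_logb two_pos (by norm_num) (inv_pos.2 hr0)]; ring
  have h2ρ : ρ ≤ 2 := by
    have := mul_le_mul_of_nonneg_right h2n_le hr0.le
    rw [mul_assoc, inv_mul_cancel₀ hr0.ne', mul_one] at this
    exact this
  -- n ≤ 2 (1 + |log r|)
  have hnle : (n:ℝ) ≤ 2 * (1 + |Real.log r|) := by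
    have hlog2 : (0.6931471803:ℝ) < Real.log 2 := Real.log_two_gt_d9
    have hlogbval : Real.logb 2 r⁻¹ = -Real.log r / Real.log 2 := by
      rw [Real.logb, Real.log_inv]
    have habs : -Real.log r ≤ |Real.log r| := neg_le_abs _
    have habs0 : 0 ≤ |Real.log r| := abs_nonneg _
    have h1 : Real.logb 2 r⁻¹ ≤ 2 * |Real.log r| := by
      rw [hlogbval, div_le_iff₀ (by linarith)]
      nlinarith
    linarith [hceil]
  -- combine
  have hbmo0 : 0 ≤ bmoSeminorm f := bmo_nonneg hb
  have hN0 : 0 ≤ (eLpNorm f (ENNReal.ofReal q) volume).toReal := ENNReal.toReal_nonneg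
  have hiter := avg_iter_bmo hf hb x hr0 n
  have hlq := avg_lq_bound hq hf hm x h1ρ h2ρ
  rw [← hρdef] at hiter
  have hmain : |⨍ y in Metric.ball x r, f y| ≤
      Cq * (eLpNorm f (ENNReal.ofReal q) volume).toReal + 8 * (n:ℝ) * bmoSeminorm f := by
    calc |⨍ y in Metric.ball x r, f y|
        ≤ |⨍ y in Metric.ball x ρ, f y|
          + |(⨍ y in Metric.ball x r, f y) - ⨍ y in Metric.ball x ρ, f y| := by
          have := abs_sub_abs_le_abs_sub (⨍ y in Metric.ball x r, f y)
            (⨍ y in Metric.ball x ρ, f y)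
          linarith [abs_sub_comm (⨍ y in Metric.ball x r, f y) (⨍ y in Metric.ball x ρ, f y)]
      _ ≤ Cq * (eLpNorm f (ENNReal.ofReal q) volume).toReal + 8 * (n:ℝ) * bmoSeminorm f :=
          add_le_add hlq hiter
  have h8n : 8 * (n:ℝ) * bmoSeminorm f ≤ 16 * ((1 + |Real.log r|) * bmoSeminorm f) := by
    have := mul_le_mul_of_nonneg_right hnle hbmo0
    nlinarith
  have habs0 : 0 ≤ |Real.log r| := abs_nonneg _
  calc |⨍ y in Metric.ball x r, f y|
      ≤ Cq * (eLpNorm f (ENNReal.ofReal q) volume).toReal + 8 * (n:ℝ) * bmoSeminorm f := hmain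
    _ ≤ Cq * (eLpNorm f (ENNReal.ofReal q) volume).toReal
        + 16 * ((1 + |Real.log r|) * bmoSeminorm f) := by linarith
    _ ≤ (16 + Cq) * ((1 + |Real.log r|) * bmoSeminorm f
        + (eLpNorm f (ENNReal.ofReal q) volume).toReal) := by
        nlinarith [mul_nonneg (mul_nonneg hCq0 (by linarith : (0:ℝ) ≤ 1 + |Real.log r|)) hbmo0,
          mul_nonneg (by linarith : (0:ℝ) ≤ 1 + |Real.log r|) hbmo0]

end
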